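/- Let m, n be positive natural numbers with m ≤ n and m dividing n, A = {0,...,n}, B = {0, m, 2m, ..., n}. Then the set S = [0,1] ∩ { a/b : a ∈ A − A, b ∈ (B − B) \ {0} } satisfies: the number of intervals of length m/n² needed to cover S is at least c·n²/m for some absolute constant c > 0. -/

import Mathlib

/-- The `ρ`-covering number of `X ⊂ ℝ`: the least number of intervals of length `ρ`
needed to cover `X`. -/
noncomputable def covN (ρ : ℝ) (X : Set ℝ) : ℕ :=
  sInf {k : ℕ | ∃ s : Finset ℝ, s.card = k ∧ X ⊆ ⋃ p ∈ s, Set.Icc p (p + ρ)}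

open Finset


/-- coprime pairs (t,q) with 1 ≤ t ≤ q ≤ Q, gcd t q = 1 -/
def cpairs (Q : ℕ) : Finset (ℕ × ℕ) :=
  (Finset.Icc 1 Q).biUnion fun q =>
    ((Finset.Icc 1 q).filter fun t => Nat.gcd t q = 1).image fun t => (t, q)

/-- all pairs (t,q) with 1 ≤ t ≤ q ≤ Q -/
def apairs (Q : ℕ) : Finset (ℕ × ℕ) :=
  (Finset.Icc 1 Q).biUnion fun q => (Finset.Icc 1 q).image fun t => (t, q)

lemma mem_cpairs {Q : ℕ} {p : ℕ × ℕ} :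
    p ∈ cpairs Q ↔ 1 ≤ p.1 ∧ p.1 ≤ p.2 ∧ p.2 ≤ Q ∧ Nat.gcd p.1 p.2 = 1 := by
  obtain ⟨t, q⟩ := p
  simp only [cpairs, Finset.mem_biUnion, Finset.mem_image, Finset.mem_filter,
    Finset.mem_Icc, Prod.mk.injEq]
  constructor
  · rintro ⟨q', ⟨h1, h2⟩, t', ⟨⟨h3, h4⟩, h5⟩, rfl, rfl⟩
    exact ⟨h3, h4, h2, h5⟩
  · rintro ⟨h1, h2, h3, h4⟩
    exact ⟨q, ⟨le_trans h1 h2, h3⟩, t, ⟨⟨h1, h2⟩, h4⟩, rfl, rfl⟩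


lemma mem_apairs {Q : ℕ} {p : ℕ × ℕ} :
    p ∈ apairs Q ↔ 1 ≤ p.1 ∧ p.1 ≤ p.2 ∧ p.2 ≤ Q := by
  obtain ⟨t, q⟩ := p
  simp only [apairs, Finset.mem_biUnion, Finset.mem_image, Finset.mem_Icc, Prod.mk.injEq]
  constructor
  · rintro ⟨q', ⟨h1, h2⟩, t', ⟨h3, h4⟩, rfl, rfl⟩
    exact ⟨h3, h4, h2⟩
  · rintro ⟨h1, h2, h3⟩
    exact ⟨q, ⟨le_trans h1 h2, h3⟩, t, ⟨h1, h2⟩, rfl, rfl⟩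

lemma apairs_card (Q : ℕ) : (apairs Q).card * 2 = Q * (Q + 1) := by
  have h : (apairs Q).card = ∑ q ∈ Finset.Icc 1 Q, q := by
    rw [apairs, Finset.card_biUnion]
    · apply Finset.sum_congr rfl
      intro q _
      rw [Finset.card_image_of_injective _ (fun a b h => by simpa using h)]
      simp
    · intro q1 h1 q2 h2 hne
      simp only [Finset.disjoint_left, Finset.mem_image]
      rintro p ⟨t1, _, rfl⟩ ⟨t2, _, h⟩
      exact hne (by simpa using (Prod.mk.injEq _ _ _ _ ▸ h).2.symm)
  rw [h]
  have : ∀ k : ℕ, (∑ q ∈ Finset.Icc 1 k, q) * 2 = k * (k+1) := by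
    intro k
    induction k with
    | zero => simp
    | succ j ih =>
      rw [Finset.sum_Icc_succ_top (by omega), add_mul, ih]
      ring
  exact this Q

lemma apairs_subset (Q : ℕ) :
    apairs Q ⊆ cpairs Q ∪ (Finset.Icc 2 Q).biUnion
      (fun d => (apairs (Q / d)).image fun p => (d * p.1, d * p.2)) := by
  intro p hp
  obtain ⟨t, q⟩ := p
  rw [mem_apairs] at hp
  obtain ⟨h1, h2, h3⟩ := hp
  rcases eq_or_ne (Nat.gcd t q) 1 with hg | hg
  · exact Finset.mem_union_left _ (mem_cpairs.mpr ⟨h1, h2, h3, hg⟩)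
  · apply Finset.mem_union_right
    set g := Nat.gcd t q with hgdef
    have hgt : g ∣ t := Nat.gcd_dvd_left _ _
    have hgq : g ∣ q := Nat.gcd_dvd_right _ _
    have hgpos : 0 < g := Nat.gcd_pos_of_pos_left _ h1
    have hg2 : 2 ≤ g := by omega
    have hgle : g ≤ Q := le_trans (Nat.le_of_dvd (by omega) hgq) h3
    refine Finset.mem_biUnion.mpr ⟨g, Finset.mem_Icc.mpr ⟨hg2, hgle⟩, ?_⟩
    refine Finset.mem_image.mpr ⟨(t / g, q / g), ?_, ?_⟩
    · rw [mem_apairs]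
      refine ⟨?_, Nat.div_le_div_right h2, Nat.div_le_div_right h3⟩
      exact Nat.one_le_div_iff hgpos |>.mpr (Nat.le_of_dvd (by omega) hgt)
    · simp [Nat.mul_div_cancel' hgt, Nat.mul_div_cancel' hgq]

lemma apairs_card_le (Q : ℕ) :
    (apairs Q).card ≤ (cpairs Q).card + ∑ d ∈ Finset.Icc 2 Q, (apairs (Q / d)).card := by
  have h1 : (apairs Q).card ≤ (cpairs Q ∪ (Finset.Icc 2 Q).biUnion
      (fun d => (apairs (Q / d)).image fun p => (d * p.1, d * p.2))).card :=
    Finset.card_le_card (apairs_subset Q)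
  have h2 := Finset.card_union_le (cpairs Q) ((Finset.Icc 2 Q).biUnion
      (fun d => (apairs (Q / d)).image fun p => (d * p.1, d * p.2)))
  have h3 : ((Finset.Icc 2 Q).biUnion
      (fun d => (apairs (Q / d)).image fun p => (d * p.1, d * p.2))).card
      ≤ ∑ d ∈ Finset.Icc 2 Q, ((apairs (Q / d)).image fun p => (d * p.1, d * p.2)).card :=
    Finset.card_biUnion_le
  have h4 : ∑ d ∈ Finset.Icc 2 Q, ((apairs (Q / d)).image fun p => (d * p.1, d * p.2)).card
      ≤ ∑ d ∈ Finset.Icc 2 Q, (apairs (Q / d)).card :=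
    Finset.sum_le_sum fun d _ => Finset.card_image_le
  omega

lemma sum_inv_sq_le (Q : ℕ) : ∑ d ∈ Finset.Icc 2 Q, (1:ℝ) / (d:ℝ)^2 ≤ 3/4 := by
  have key : ∀ k : ℕ, 2 ≤ k → ∑ d ∈ Finset.Icc 2 k, (1:ℝ) / (d:ℝ)^2 ≤ 3/4 - 1/(k:ℝ) := by
    intro k hk
    induction k, hk using Nat.le_induction with
    | base => norm_num
    | succ j hj ih =>
      rw [Finset.sum_Icc_succ_top (by omega : 2 ≤ j + 1)]
      have hjR : (1:ℝ) ≤ (j:ℝ) := by exact_mod_cast Nat.one_le_of_lt hj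
      have hj2 : (2:ℝ) ≤ (j:ℝ) := by exact_mod_cast hj
      have step : (1:ℝ)/((j:ℝ)+1)^2 + 1/((j:ℝ)+1) ≤ 1/(j:ℝ) := by
        rw [div_add_div _ _ (by positivity) (by positivity), div_le_div_iff₀ (by positivity) (by positivity)]
        ring_nf
        nlinarith
      push_cast
      linarith [ih]
  rcases Nat.lt_or_ge Q 2 with h | h
  · interval_cases Q <;> norm_num
  · have := key Q (by omega)
    have hQ : (0:ℝ) < (Q:ℝ) := by positivity
    have : (0:ℝ) < 1/(Q:ℝ) := by positivity
    linarith [key Q (by omega)]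

lemma sum_inv_le (Q : ℕ) : ∑ d ∈ Finset.Icc 2 Q, (1:ℝ) / (d:ℝ) ≤ 2 * Real.sqrt Q := by
  induction Q with
  | zero => simp
  | succ j ih =>
    rcases Nat.lt_or_ge (j+1) 2 with h | h
    · have hj0 : j = 0 := by omega
      subst hj0
      simp [Real.sqrt_nonneg]
    · rw [Finset.sum_Icc_succ_top h]
      have hj1 : (0:ℝ) < (j:ℝ) + 1 := by positivity
      have ha : Real.sqrt ((j:ℝ)+1) ^ 2 = (j:ℝ)+1 := Real.sq_sqrt (by positivity)
      have hb : Real.sqrt (j:ℝ) ^ 2 = (j:ℝ) := Real.sq_sqrt (by positivity)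
      have ha0 : 0 ≤ Real.sqrt ((j:ℝ)+1) := Real.sqrt_nonneg _
      have hb0 : 0 ≤ Real.sqrt (j:ℝ) := Real.sqrt_nonneg _
      have ha1 : 1 ≤ Real.sqrt ((j:ℝ)+1) := by nlinarith
      have hstep : 1/((j:ℝ)+1) ≤ 2 * (Real.sqrt ((j:ℝ)+1) - Real.sqrt (j:ℝ)) := by
        rw [div_le_iff₀ hj1]
        nlinarith [sq_nonneg (Real.sqrt ((j:ℝ)+1) - Real.sqrt (j:ℝ)),
          sq_nonneg (Real.sqrt ((j:ℝ)+1) + Real.sqrt (j:ℝ))]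
      push_cast
      push_cast at ih
      linarith

lemma cpairs_card_ge (Q : ℕ) : Q ≤ (cpairs Q).card := by
  have : (Finset.Icc 1 Q).image (fun q => (1, q)) ⊆ cpairs Q := by
    intro p hp
    obtain ⟨q, hq, rfl⟩ := Finset.mem_image.mp hp
    rw [Finset.mem_Icc] at hq
    exact mem_cpairs.mpr ⟨le_refl 1, hq.1, hq.2, Nat.gcd_one_left _⟩
  have h2 := Finset.card_le_card this
  rw [Finset.card_image_of_injective _ (fun a b h => (Prod.mk.injEq _ _ _ _ ▸ h).2)] at h2
  simpa using h2

lemma cpairs_bound (Q : ℕ) : (Q:ℝ)^2 ≤ 256 * ((cpairs Q).card : ℝ) := by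
  rcases le_or_gt Q 256 with hQ | hQ
  · have h1 : (Q:ℝ) ≤ ((cpairs Q).card : ℝ) := by exact_mod_cast cpairs_card_ge Q
    have h2 : (Q:ℝ) ≤ 256 := by exact_mod_cast hQ
    nlinarith [Nat.cast_nonneg (α := ℝ) Q]
  · have hQR : (256:ℝ) < (Q:ℝ) := by exact_mod_cast hQ
    have hQpos : (0:ℝ) < (Q:ℝ) := by linarith
    have hcard : ((apairs Q).card : ℝ) ≤ ((cpairs Q).card : ℝ)
        + ∑ d ∈ Finset.Icc 2 Q, ((apairs (Q/d)).card : ℝ) := by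
      have := apairs_card_le Q
      push_cast
      exact_mod_cast this
    have hA : ((apairs Q).card : ℝ) * 2 = (Q:ℝ) * ((Q:ℝ)+1) := by
      exact_mod_cast congrArg (Nat.cast (R := ℝ)) (apairs_card Q)
    have hAd : ∀ d ∈ Finset.Icc 2 Q, ((apairs (Q/d)).card : ℝ)
        ≤ (Q:ℝ)^2/2 * (1/(d:ℝ)^2) + (Q:ℝ)/2 * (1/(d:ℝ)) := by
      intro d hd
      rw [Finset.mem_Icc] at hd
      have hdpos : (0:ℝ) < (d:ℝ) := by
        have : 0 < d := by omega
        exact_mod_cast this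
      have hM : ((Q/d : ℕ) : ℝ) ≤ (Q:ℝ)/(d:ℝ) := Nat.cast_div_le
      have hM0 : (0:ℝ) ≤ ((Q/d : ℕ) : ℝ) := Nat.cast_nonneg _
      have h2 : ((apairs (Q/d)).card : ℝ) * 2 = ((Q/d : ℕ) : ℝ) * (((Q/d : ℕ) : ℝ)+1) := by
        exact_mod_cast congrArg (Nat.cast (R := ℝ)) (apairs_card (Q/d))
      have hQd : (0:ℝ) ≤ (Q:ℝ)/(d:ℝ) := by positivity
      have : ((Q/d : ℕ) : ℝ) * (((Q/d : ℕ) : ℝ)+1) ≤ ((Q:ℝ)/(d:ℝ)) * ((Q:ℝ)/(d:ℝ)+1) := by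
        nlinarith
      have hexp : ((Q:ℝ)/(d:ℝ)) * ((Q:ℝ)/(d:ℝ)+1)
          = ((Q:ℝ)^2/2 * (1/(d:ℝ)^2) + (Q:ℝ)/2 * (1/(d:ℝ))) * 2 := by
        field_simp
      linarith
    have hsum : ∑ d ∈ Finset.Icc 2 Q, ((apairs (Q/d)).card : ℝ)
        ≤ 3/8*(Q:ℝ)^2 + (Q:ℝ) * Real.sqrt Q := by
      calc ∑ d ∈ Finset.Icc 2 Q, ((apairs (Q/d)).card : ℝ)
          ≤ ∑ d ∈ Finset.Icc 2 Q, ((Q:ℝ)^2/2 * (1/(d:ℝ)^2) + (Q:ℝ)/2 * (1/(d:ℝ))) :=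
            Finset.sum_le_sum hAd
        _ = (Q:ℝ)^2/2 * (∑ d ∈ Finset.Icc 2 Q, (1:ℝ)/(d:ℝ)^2)
            + (Q:ℝ)/2 * (∑ d ∈ Finset.Icc 2 Q, (1:ℝ)/(d:ℝ)) := by
            rw [Finset.sum_add_distrib, Finset.mul_sum, Finset.mul_sum]
        _ ≤ (Q:ℝ)^2/2 * (3/4) + (Q:ℝ)/2 * (2 * Real.sqrt Q) := by
            have h1 := sum_inv_sq_le Q
            have h2 := sum_inv_le Q
            have e1 : (0:ℝ) ≤ (Q:ℝ)^2/2 := by positivity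
            have e2 : (0:ℝ) ≤ (Q:ℝ)/2 := by positivity
            exact add_le_add (mul_le_mul_of_nonneg_left h1 e1) (mul_le_mul_of_nonneg_left h2 e2)
        _ = 3/8*(Q:ℝ)^2 + (Q:ℝ) * Real.sqrt Q := by ring
    have hsqrt : Real.sqrt Q ≤ (Q:ℝ)/16 := by
      have h16 : (16:ℝ) ≤ Real.sqrt Q := by
        rw [show (16:ℝ) = Real.sqrt 256 by
          rw [show (256:ℝ) = 16^2 by norm_num, Real.sqrt_sq (by norm_num)]]
        exact Real.sqrt_le_sqrt (by linarith)
      have hs : Real.sqrt Q * Real.sqrt Q = (Q:ℝ) := Real.mul_self_sqrt (le_of_lt hQpos)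
      nlinarith
    have hC : (Q:ℝ)^2/16 ≤ ((cpairs Q).card : ℝ) := by nlinarith
    linarith

lemma pair_loc {ρ p x y : ℝ} (hρ : 0 < ρ) (hx : x ∈ Set.Icc p (p+ρ))
    (hy : y ∈ Set.Icc p (p+ρ)) (h : ρ ≤ |x - y|) :
    (x = p ∧ y = p + ρ) ∨ (x = p + ρ ∧ y = p) := by
  obtain ⟨hx1, hx2⟩ := hx
  obtain ⟨hy1, hy2⟩ := hy
  rcases abs_cases (x - y) with ⟨he, _⟩ | ⟨he, _⟩ <;> rw [he] at h
  · right; constructor <;> linarith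
  · left; constructor <;> linarith

lemma sep_card_le {ρ p : ℝ} (hρ : 0 < ρ) (F : Finset ℝ)
    (hF : ∀ x ∈ F, x ∈ Set.Icc p (p+ρ))
    (hsep : ∀ x ∈ F, ∀ y ∈ F, x ≠ y → ρ ≤ |x - y|) : F.card ≤ 2 := by
  by_contra hc
  push_neg at hc
  obtain ⟨a, b, c, ha, hb, hcm, hab, hac, hbc⟩ := Finset.two_lt_card_iff.mp hc
  rcases pair_loc hρ (hF a ha) (hF b hb) (hsep a ha b hb hab) with ⟨e1, e2⟩ | ⟨e1, e2⟩ <;>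
  rcases pair_loc hρ (hF a ha) (hF c hcm) (hsep a ha c hcm hac) with ⟨f1, f2⟩ | ⟨f1, f2⟩ <;>
  [skip; skip; skip; skip] <;>
  · first
    | (exact hbc (e2.trans f2.symm))
    | (exact absurd (e1.symm.trans f1) (by intro h; linarith))
    | (exact hbc (by linarith))

lemma covN_lower {ρ : ℝ} (hρ : 0 < ρ) {X : Set ℝ} (P : Finset ℝ)
    (hPX : ∀ x ∈ P, x ∈ X)
    (hsep : ∀ x ∈ P, ∀ y ∈ P, x ≠ y → ρ ≤ |x - y|)
    (hne : {k : ℕ | ∃ s : Finset ℝ, s.card = k ∧ X ⊆ ⋃ p ∈ s, Set.Icc p (p + ρ)}.Nonempty) :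
    P.card ≤ 2 * covN ρ X := by
  have hmem := Nat.sInf_mem hne
  obtain ⟨s, hs, hcov⟩ := hmem
  have hex : ∀ x ∈ P, ∃ q ∈ s, x ∈ Set.Icc q (q + ρ) := by
    intro x hx
    have h := hcov (hPX x hx)
    rw [Set.mem_iUnion₂] at h
    obtain ⟨q, hq, hqx⟩ := h
    exact ⟨q, hq, hqx⟩
  classical
  let f : ℝ → ℝ := fun x => if h : ∃ q ∈ s, x ∈ Set.Icc q (q + ρ) then h.choose else 0
  have hf : ∀ x ∈ P, f x ∈ s ∧ x ∈ Set.Icc (f x) (f x + ρ) := by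
    intro x hx
    have h := hex x hx
    simp only [f, dif_pos h]
    exact ⟨h.choose_spec.1, h.choose_spec.2⟩
  have key := Finset.card_le_mul_card_image_of_maps_to
    (f := f) (s := P) (t := s) (fun x hx => (hf x hx).1) 2 ?_
  · rw [hs] at key
    exact key
  · intro b _
    apply sep_card_le hρ (p := b)
    · intro x hx
      rw [Finset.mem_filter] at hx
      have := (hf x hx.1).2
      rw [hx.2] at this
      exact this
    · intro x hx y hy hxy
      rw [Finset.mem_filter] at hx hy
      exact hsep x hx.1 y hy.1 hxy

lemma coprime_eq {t q t' q' : ℕ} (hq : 0 < q) (hq' : 0 < q')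
    (hg : Nat.gcd t q = 1) (hg' : Nat.gcd t' q' = 1) (h : t * q' = t' * q) :
    t = t' ∧ q = q' := by
  have hc : Nat.Coprime q t := (Nat.coprime_comm.mpr hg)
  have hc' : Nat.Coprime q' t' := (Nat.coprime_comm.mpr hg')
  have h1 : q ∣ t * q' := ⟨t', by linarith [h]⟩
  have h2 : q ∣ q' := (Nat.Coprime.dvd_of_dvd_mul_left hc) h1
  have h1' : q' ∣ t' * q := ⟨t, by linarith [h]⟩
  have h2' : q' ∣ q := (Nat.Coprime.dvd_of_dvd_mul_left hc') h1'
  have hqq : q = q' := Nat.dvd_antisymm h2 h2'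
  subst hqq
  exact ⟨Nat.eq_of_mul_eq_mul_right hq h, rfl⟩

lemma sep_lt (m Q : ℕ) (hm : 0 < m) (r t q r' t' q' : ℕ)
    (ht : 1 ≤ t) (htq : t ≤ q) (hqQ : q ≤ Q)
    (ht' : 1 ≤ t') (htq' : t' ≤ q') (hqQ' : q' ≤ Q)
    (hrr : r < r') :
    1/((Q:ℝ)^2 * m) ≤ ((r':ℝ)*q' + t')/((q':ℝ)*m) - ((r:ℝ)*q + t)/((q:ℝ)*m) := by
  have hq0 : 0 < q := lt_of_lt_of_le ht htq
  have hq0' : 0 < q' := lt_of_lt_of_le ht' htq'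
  have hQ0 : 0 < Q := lt_of_lt_of_le hq0 hqQ
  have hqR : (0:ℝ) < q := by exact_mod_cast hq0
  have hqR' : (0:ℝ) < q' := by exact_mod_cast hq0'
  have hQR : (0:ℝ) < Q := by exact_mod_cast hQ0
  have hmR : (0:ℝ) < m := by exact_mod_cast hm
  have e' : ((r':ℝ)*q' + t')/((q':ℝ)*m) = (r':ℝ)/m + (t':ℝ)/((q':ℝ)*m) := by
    field_simp
  have hx_le : ((r:ℝ)*q + t)/((q:ℝ)*m) ≤ ((r:ℝ)+1)/m := by
    rw [div_le_div_iff₀ (by positivity) hmR]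
    have htle : (t:ℝ) ≤ (q:ℝ) := by exact_mod_cast htq
    nlinarith
  have hr1 : (r:ℝ) + 1 ≤ (r':ℝ) := by exact_mod_cast hrr
  have ht1 : (1:ℝ) ≤ (t':ℝ) := by exact_mod_cast ht'
  have hstep : 1/((Q:ℝ)^2 * m) ≤ (t':ℝ)/((q':ℝ)*m) := by
    rw [div_le_div_iff₀ (by positivity) (by positivity)]
    have hq'Q : (q':ℝ) ≤ (Q:ℝ) := by exact_mod_cast hqQ'
    have hQ1 : (1:ℝ) ≤ (Q:ℝ) := by exact_mod_cast hQ0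
    nlinarith [mul_le_mul_of_nonneg_right hq'Q hmR.le,
      mul_le_mul_of_nonneg_right (mul_le_mul_of_nonneg_right hQ1 hmR.le) hQR.le,
      mul_le_mul_of_nonneg_right ht1 (by positivity : (0:ℝ) ≤ (Q:ℝ)^2*m)]
  have hr'm : (r':ℝ)/m + (t':ℝ)/((q':ℝ)*m) - ((r:ℝ)+1)/m ≥ (t':ℝ)/((q':ℝ)*m) := by
    have : ((r:ℝ)+1)/m ≤ (r':ℝ)/m := by gcongr
    linarith
  rw [e']
  linarith

lemma sep_main (m Q : ℕ) (hm : 0 < m) (r t q r' t' q' : ℕ)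
    (ht : 1 ≤ t) (htq : t ≤ q) (hqQ : q ≤ Q)
    (ht' : 1 ≤ t') (htq' : t' ≤ q') (hqQ' : q' ≤ Q)
    (hg : Nat.gcd t q = 1) (hg' : Nat.gcd t' q' = 1)
    (hne : (r, t, q) ≠ (r', t', q')) :
    1/((Q:ℝ)^2 * m) ≤ |((r:ℝ)*q + t)/((q:ℝ)*m) - ((r':ℝ)*q' + t')/((q':ℝ)*m)| := by
  have hq0 : 0 < q := lt_of_lt_of_le ht htq
  have hq0' : 0 < q' := lt_of_lt_of_le ht' htq'
  have hQ0 : 0 < Q := lt_of_lt_of_le hq0 hqQ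
  have hqR : (0:ℝ) < q := by exact_mod_cast hq0
  have hqR' : (0:ℝ) < q' := by exact_mod_cast hq0'
  have hQR : (0:ℝ) < Q := by exact_mod_cast hQ0
  have hmR : (0:ℝ) < m := by exact_mod_cast hm
  rcases lt_trichotomy r r' with hrr | hrr | hrr
  · have := sep_lt m Q hm r t q r' t' q' ht htq hqQ ht' htq' hqQ' hrr
    rw [abs_sub_comm]
    exact this.trans (le_abs_self _)
  · -- r = r'
    subst hrr
    have hpq : (t, q) ≠ (t', q') := by
      intro h
      exact hne (by rw [Prod.mk.injEq]; exact ⟨rfl, h⟩)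
    have hint : (t * q' : ℤ) ≠ (t' * q : ℤ) := by
      intro h
      have : t * q' = t' * q := by exact_mod_cast h
      obtain ⟨h1, h2⟩ := coprime_eq hq0 hq0' hg hg' this
      exact hpq (by rw [h1, h2])
    have habs : (1:ℝ) ≤ |(t:ℝ)*q' - (t':ℝ)*q| := by
      have h1 : (1:ℤ) ≤ |(t*q' : ℤ) - (t'*q : ℤ)| := by
        exact Int.one_le_abs (sub_ne_zero.mpr hint)
      calc (1:ℝ) = ((1:ℤ):ℝ) := by norm_num
        _ ≤ ((|(t*q' : ℤ) - (t'*q : ℤ)| : ℤ) : ℝ) := by exact_mod_cast h1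
        _ = |(((t*q' : ℤ) - (t'*q : ℤ) : ℤ) : ℝ)| := by rw [Int.cast_abs]
        _ = |(t:ℝ)*q' - (t':ℝ)*q| := by push_cast; ring_nf
    have hdiff : ((r:ℝ)*q + t)/((q:ℝ)*m) - ((r:ℝ)*q' + t')/((q':ℝ)*m)
        = ((t:ℝ)*q' - (t':ℝ)*q)/((q:ℝ)*q'*m) := by
      field_simp
      ring
    rw [hdiff, abs_div]
    have hden : |(q:ℝ)*q'*m| = (q:ℝ)*q'*m := abs_of_pos (by positivity)
    rw [hden]
    rw [div_le_div_iff₀ (by positivity) (by positivity)]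
    have hq1 : (q:ℝ) ≤ Q := by exact_mod_cast hqQ
    have hq2 : (q':ℝ) ≤ Q := by exact_mod_cast hqQ'
    calc 1 * ((q:ℝ)*q'*m) ≤ 1 * ((Q:ℝ)*Q*m) := by
          rw [one_mul, one_mul]
          have := mul_le_mul hq1 hq2 (le_of_lt hqR') (le_of_lt (by positivity))
          exact mul_le_mul_of_nonneg_right this hmR.le
      _ ≤ |(t:ℝ)*q' - (t':ℝ)*q| * ((Q:ℝ)^2*m) := by
          rw [one_mul]
          have h2 : (Q:ℝ)*Q*m = (Q:ℝ)^2*m := by ring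
          rw [h2]
          exact le_mul_of_one_le_left (by positivity) habs
  · have := sep_lt m Q hm r' t' q' r t q ht' htq' hqQ' ht htq hqQ hrr
    exact this.trans (le_abs_self _)

lemma cover_nonempty {ρ : ℝ} (hρ : 0 < ρ) {X : Set ℝ} (hX : X ⊆ Set.Icc 0 1)
    (K : ℕ) (hK : 1 ≤ (K:ℝ) * ρ) :
    {k : ℕ | ∃ s : Finset ℝ, s.card = k ∧ X ⊆ ⋃ p ∈ s, Set.Icc p (p + ρ)}.Nonempty := by
  refine ⟨((Finset.range (K+1)).image (fun i : ℕ => (i:ℝ)*ρ)).card,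
    (Finset.range (K+1)).image (fun i : ℕ => (i:ℝ)*ρ), rfl, ?_⟩
  intro x hx
  obtain ⟨hx0, hx1⟩ := hX hx
  set i := ⌊x/ρ⌋₊ with hi
  have hi_le : (i:ℝ) ≤ x/ρ := Nat.floor_le (by positivity)
  have hi_lt : x/ρ < i + 1 := Nat.lt_floor_add_one _
  have hiK : i ≤ K := by
    have h1 : x/ρ ≤ (K:ℝ) := by
      rw [div_le_iff₀ hρ]
      calc x ≤ 1 := hx1
        _ ≤ (K:ℝ) * ρ := hK
    calc i = ⌊x/ρ⌋₊ := hi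
      _ ≤ ⌊(K:ℝ)⌋₊ := Nat.floor_le_floor h1
      _ = K := Nat.floor_natCast K
  rw [Set.mem_iUnion₂]
  refine ⟨(i:ℝ)*ρ, ?_, ?_, ?_⟩
  · exact Finset.mem_image.mpr ⟨i, Finset.mem_range.mpr (by omega), rfl⟩
  · calc (i:ℝ)*ρ ≤ (x/ρ)*ρ := by gcongr
      _ = x := div_mul_cancel₀ x (ne_of_gt hρ)
  · have : x < ((i:ℝ)+1)*ρ := by
      calc x = (x/ρ)*ρ := (div_mul_cancel₀ x (ne_of_gt hρ)).symm
        _ < ((i:ℝ)+1)*ρ := by gcongr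
    linarith [this]


/-- With `A = {0,…,n}` and `B = {0,m,2m,…,n}` (`m ∣ n`, `m ≤ n`), the set
`[0,1] ∩ (A−A)/((B−B)\{0})` has `(m/n²)`-covering number at least `c·n²/m`,
for an absolute constant `c > 0`. -/
theorem stmt1 :
    ∃ c : ℝ, 0 < c ∧ ∀ m n : ℕ, 0 < m → 0 < n → m ≤ n → m ∣ n →
      c * (n:ℝ)^2 / m ≤
        (covN ((m:ℝ) / (n:ℝ)^2)
          (Set.Icc (0:ℝ) 1 ∩
            {x : ℝ | ∃ a b : ℤ,
              (∃ a₁ a₂ : ℤ, 0 ≤ a₁ ∧ a₁ ≤ (n:ℤ) ∧ 0 ≤ a₂ ∧ a₂ ≤ (n:ℤ) ∧ a = a₁ - a₂) ∧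
              (∃ b₁ b₂ : ℤ, 0 ≤ b₁ ∧ b₁ ≤ (n:ℤ) ∧ (m:ℤ) ∣ b₁ ∧
                0 ≤ b₂ ∧ b₂ ≤ (n:ℤ) ∧ (m:ℤ) ∣ b₂ ∧ b = b₁ - b₂) ∧
              b ≠ 0 ∧ x = (a:ℝ) / (b:ℝ)}) : ℝ) := by
  refine ⟨1/512, by norm_num, ?_⟩
  intro m n hm hn hmn hdvd
  classical
  set Q := n / m with hQdef
  have hQm : Q * m = n := Nat.div_mul_cancel hdvd
  have hQ0 : 0 < Q := Nat.div_pos hmn hm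
  have hmR : (0:ℝ) < m := by exact_mod_cast hm
  have hnR : (0:ℝ) < n := by exact_mod_cast hn
  have hQR : (0:ℝ) < Q := by exact_mod_cast hQ0
  have hnQm : (n:ℝ) = (Q:ℝ) * m := by exact_mod_cast hQm.symm
  set ρ : ℝ := (m:ℝ) / (n:ℝ)^2 with hρdef
  have hρpos : 0 < ρ := by positivity
  have hρeq : ρ = 1/((Q:ℝ)^2 * m) := by
    rw [hρdef, hnQm]
    field_simp
  set X : Set ℝ := Set.Icc (0:ℝ) 1 ∩
            {x : ℝ | ∃ a b : ℤ,
              (∃ a₁ a₂ : ℤ, 0 ≤ a₁ ∧ a₁ ≤ (n:ℤ) ∧ 0 ≤ a₂ ∧ a₂ ≤ (n:ℤ) ∧ a = a₁ - a₂) ∧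
              (∃ b₁ b₂ : ℤ, 0 ≤ b₁ ∧ b₁ ≤ (n:ℤ) ∧ (m:ℤ) ∣ b₁ ∧
                0 ≤ b₂ ∧ b₂ ≤ (n:ℤ) ∧ (m:ℤ) ∣ b₂ ∧ b = b₁ - b₂) ∧
              b ≠ 0 ∧ x = (a:ℝ) / (b:ℝ)} with hXdef
  set ψ : ℕ × ℕ × ℕ → ℝ := fun u => ((u.1:ℝ)*(u.2.2:ℝ) + (u.2.1:ℝ))/((u.2.2:ℝ)*(m:ℝ))
    with hψdef
  set T : Finset (ℕ × ℕ × ℕ) := (Finset.range m) ×ˢ cpairs Q with hTdef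
  have hTmem : ∀ u ∈ T, u.1 < m ∧ 1 ≤ u.2.1 ∧ u.2.1 ≤ u.2.2 ∧ u.2.2 ≤ Q
      ∧ Nat.gcd u.2.1 u.2.2 = 1 := by
    intro u hu
    rw [hTdef, Finset.mem_product] at hu
    obtain ⟨h1, h2⟩ := hu
    rw [mem_cpairs] at h2
    exact ⟨Finset.mem_range.mp h1, h2.1, h2.2.1, h2.2.2.1, h2.2.2.2⟩
  have hsepT : ∀ u ∈ T, ∀ u' ∈ T, u ≠ u' → ρ ≤ |ψ u - ψ u'| := by
    intro u hu u' hu' hne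
    obtain ⟨c1, c2, c3, c4, c5⟩ := hTmem u hu
    obtain ⟨d1, d2, d3, d4, d5⟩ := hTmem u' hu'
    rw [hρeq]
    have := sep_main m Q hm u.1 u.2.1 u.2.2 u'.1 u'.2.1 u'.2.2 c2 c3 c4 d2 d3 d4 c5 d5
      (by simpa using hne)
    simpa [hψdef] using this
  set P : Finset ℝ := T.image ψ with hPdef
  have hinj : Set.InjOn ψ T := by
    intro u hu u' hu' heq
    by_contra hne
    have := hsepT u (by exact_mod_cast hu) u' (by exact_mod_cast hu') hne
    rw [heq] at this
    simp at this
    linarith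
  have hPcard : P.card = m * (cpairs Q).card := by
    rw [hPdef, Finset.card_image_of_injOn hinj, hTdef, Finset.card_product,
      Finset.card_range]
  have hPsep : ∀ x ∈ P, ∀ y ∈ P, x ≠ y → ρ ≤ |x - y| := by
    intro x hx y hy hxy
    obtain ⟨u, hu, rfl⟩ := Finset.mem_image.mp hx
    obtain ⟨u', hu', rfl⟩ := Finset.mem_image.mp hy
    exact hsepT u hu u' hu' (fun h => hxy (by rw [h]))
  have hPX : ∀ x ∈ P, x ∈ X := by
    intro x hx
    obtain ⟨u, hu, rfl⟩ := Finset.mem_image.mp hx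
    obtain ⟨c1, c2, c3, c4, c5⟩ := hTmem u hu
    obtain ⟨r, t, q⟩ := u
    simp only at c1 c2 c3 c4 c5
    have hq0 : 0 < q := lt_of_lt_of_le c2 c3
    have hqR : (0:ℝ) < q := by exact_mod_cast hq0
    have hnum_le : r * q + t ≤ q * m := by
      calc r * q + t ≤ r * q + q := by omega
        _ = (r + 1) * q := by ring
        _ ≤ m * q := Nat.mul_le_mul_right q (by omega)
        _ = q * m := Nat.mul_comm m q
    have hqm_le_n : q * m ≤ n := by
      calc q * m ≤ Q * m := Nat.mul_le_mul_right m c4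
        _ = n := hQm
    constructor
    · -- x ∈ Icc 0 1
      constructor
      · apply div_nonneg (by positivity) (by positivity)
      · rw [div_le_one (by positivity)]
        have : ((r * q + t : ℕ) : ℝ) ≤ ((q * m : ℕ) : ℝ) := by exact_mod_cast hnum_le
        push_cast at this
        simpa [hψdef] using this
    · -- membership in the fraction set
      refine ⟨(r*q+t : ℤ), (q*m : ℤ), ⟨(r*q+t : ℤ), 0, ?_, ?_, le_refl 0, ?_, by ring⟩,
        ⟨(q*m : ℤ), 0, ?_, ?_, ⟨q, by ring⟩, le_refl 0, ?_, ⟨0, by ring⟩, by ring⟩,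
        ?_, ?_⟩
      · positivity
      · exact_mod_cast le_trans hnum_le hqm_le_n
      · exact_mod_cast Nat.zero_le n
      · positivity
      · exact_mod_cast hqm_le_n
      · exact_mod_cast Nat.zero_le n
      · have : (0:ℤ) < (q*m : ℤ) := by positivity
        omega
      · push_cast
        rfl
  have hne : {k : ℕ | ∃ s : Finset ℝ, s.card = k ∧ X ⊆ ⋃ p ∈ s, Set.Icc p (p + ρ)}.Nonempty := by
    apply cover_nonempty hρpos (fun x hx => hx.1) (n*n)
    rw [hρdef]
    have hmR1 : (1:ℝ) ≤ (m:ℝ) := by exact_mod_cast hm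
    have : ((n*n : ℕ):ℝ) * ((m:ℝ)/(n:ℝ)^2) = (m:ℝ) := by
      push_cast
      field_simp
    rw [this]
    exact hmR1
  have hkey : P.card ≤ 2 * covN ρ X := covN_lower hρpos P hPX hPsep hne
  have hcp := cpairs_bound Q
  have hcovR : ((P.card : ℕ) : ℝ) ≤ 2 * (covN ρ X : ℝ) := by exact_mod_cast hkey
  rw [hPcard] at hcovR
  push_cast at hcovR
  have hfinal : (1/512) * (n:ℝ)^2 / m ≤ (covN ρ X : ℝ) := by
    rw [hnQm]
    have h1 : (1/512) * ((Q:ℝ)*m)^2 / m = (Q:ℝ)^2 * m / 512 := by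
      field_simp
    rw [h1]
    nlinarith [hcovR, hcp, hmR]
  exact hfinal
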